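/- Let R₁ > 0, D ≥ 0, and c̄ > 0. Suppose u : [0,1] → ℝ is differentiable with u(0) ≥ 0 and u̇(t) ≥ c̄ t^D − R₁ u(t) for all t ∈ [0,1]. Then u(t) ≥ b t^{D+1} for all t ∈ [0,1], where b = e^{−R₁} c̄ / (D+1). -/

import Mathlib

/-- ODE comparison lemma: if `u(0) ≥ 0` and `u̇(t) ≥ c̄ t^D − R₁ u(t)` on `[0,1]`,
then `u(t) ≥ b t^{D+1}` with `b = e^{−R₁} c̄/(D+1)`. -/
theorem stmt12 (R1 D cb : ℝ) (hR1 : 0 < R1) (hD : 0 ≤ D) (hcb : 0 < cb)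
    (u : ℝ → ℝ) (hu0 : 0 ≤ u 0)
    (hdiff : ∀ t ∈ Set.Icc (0 : ℝ) 1, DifferentiableAt ℝ u t)
    (hineq : ∀ t ∈ Set.Icc (0 : ℝ) 1, cb * t ^ D - R1 * u t ≤ deriv u t) :
    ∀ t ∈ Set.Icc (0 : ℝ) 1,
      (Real.exp (-R1) * cb / (D + 1)) * t ^ (D + 1) ≤ u t := by
  set h : ℝ → ℝ := fun t => Real.exp (R1 * t) * u t - cb / (D + 1) * t ^ (D + 1) with hh
  have hD1 : (0:ℝ) < D + 1 := by linarith
  have hcont : ContinuousOn h (Set.Icc 0 1) := by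
    apply ContinuousOn.sub
    · exact (Real.continuous_exp.comp (continuous_const.mul continuous_id)).continuousOn.mul
        (fun t ht => (hdiff t ht).continuousAt.continuousWithinAt)
    · apply ContinuousOn.mul continuousOn_const
      intro t ht
      exact (Real.continuousAt_rpow_const t (D+1) (Or.inr hD1.le)).continuousWithinAt
  have hmono : MonotoneOn h (Set.Icc 0 1) := by
    apply monotoneOn_of_deriv_nonneg (convex_Icc 0 1) hcont
    · intro t ht
      rw [interior_Icc] at ht
      have htI : t ∈ Set.Icc (0:ℝ) 1 := Set.mem_Icc.2 ⟨ht.1.le, ht.2.le⟩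
      exact (((Real.differentiable_exp.differentiableAt.comp t
        ((differentiable_const R1).differentiableAt.mul differentiableAt_id)).mul
        (hdiff t htI)).sub ((differentiableAt_const _).mul
        (Real.differentiableAt_rpow_const_of_ne _ (ne_of_gt ht.1)))).differentiableWithinAt
    · intro t ht
      rw [interior_Icc] at ht
      have htI : t ∈ Set.Icc (0:ℝ) 1 := Set.mem_Icc.2 ⟨ht.1.le, ht.2.le⟩
      have hexp : HasDerivAt (fun s => Real.exp (R1 * s)) (R1 * Real.exp (R1 * t)) t := by
        have := (Real.hasDerivAt_exp (R1 * t)).comp t ((hasDerivAt_id t).const_mul R1)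
        simpa [mul_comm, Function.comp_def] using this
      have hrpow : HasDerivAt (fun s : ℝ => s ^ (D + 1)) ((D + 1) * t ^ D) t := by
        have := Real.hasDerivAt_rpow_const (x := t) (p := D + 1) (Or.inl (ne_of_gt ht.1))
        simpa using this
      have hderiv : HasDerivAt h
          (R1 * Real.exp (R1 * t) * u t + Real.exp (R1 * t) * deriv u t
            - cb / (D + 1) * ((D + 1) * t ^ D)) t :=
        (hexp.mul ((hdiff t htI).hasDerivAt)).sub (hrpow.const_mul (cb / (D + 1)))
      rw [hderiv.deriv]
      have h1 : cb * t ^ D - R1 * u t ≤ deriv u t := hineq t htI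
      have h2 : (1:ℝ) ≤ Real.exp (R1 * t) := by
        rw [Real.one_le_exp_iff]
        exact mul_nonneg hR1.le ht.1.le
      have h3 : (0:ℝ) ≤ t ^ D := Real.rpow_nonneg ht.1.le D
      have h4 : cb / (D + 1) * ((D + 1) * t ^ D) = cb * t ^ D := by
        have hne : D + 1 ≠ 0 := ne_of_gt hD1
        field_simp
      rw [h4]
      nlinarith [mul_le_mul_of_nonneg_left h1 (Real.exp_pos (R1*t)).le,
        mul_le_mul_of_nonneg_right h2 (mul_pos hcb (Real.rpow_pos_of_pos ht.1 D)).le]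
  intro t ht
  have key := hmono (Set.left_mem_Icc.2 zero_le_one) ht ht.1
  have h0 : h 0 = u 0 := by
    simp [hh, Real.zero_rpow (ne_of_gt hD1)]
  rw [h0] at key
  -- key : u 0 ≤ exp(R1 t) * u t - cb/(D+1) * t^(D+1)
  have hexp1 : Real.exp (R1 * t) ≤ Real.exp R1 := by
    apply Real.exp_le_exp.2
    nlinarith [ht.1, ht.2]
  have htp : (0:ℝ) ≤ t ^ (D+1) := Real.rpow_nonneg ht.1 _
  have h5 : cb / (D + 1) * t ^ (D + 1) ≤ Real.exp (R1 * t) * u t := by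
    simp only [hh] at key; linarith
  have hut : 0 ≤ u t := by
    nlinarith [Real.exp_pos (R1 * t), div_nonneg hcb.le hD1.le]
  calc Real.exp (-R1) * cb / (D + 1) * t ^ (D + 1)
      = Real.exp (-R1) * (cb / (D + 1) * t ^ (D + 1)) := by ring
    _ ≤ Real.exp (-R1) * (Real.exp (R1 * t) * u t) := by
        exact mul_le_mul_of_nonneg_left h5 (Real.exp_pos _).le
    _ ≤ u t := by
        rw [← mul_assoc, ← Real.exp_add]
        have : Real.exp (-R1 + R1 * t) ≤ 1 := by
          rw [Real.exp_le_one_iff]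
          nlinarith [ht.1, ht.2]
        nlinarith [this]
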